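/- For every h > 0 and T > 0, \sum_{n \in \Z} (1 - 4h^2 n^2/T) exp(-2h^2 n^2/T) = -(1/2) \sum_{n \in \Z} H_2((2h/\sqrt{2T}) n) exp(-2h^2 n^2/T), where H_2(x) = 4x^2 - 2; moreover this quantity lies in [0,1]. -/

import Mathlib

open Real Filter

/-- The second physicists' Hermite polynomial. -/
noncomputable def hermiteH2 (x : ℝ) : ℝ := 4 * x ^ 2 - 2

namespace BesselAux

lemma summable_nat_exp {a : ℝ} (ha : 0 < a) :
    Summable (fun n : ℕ => Real.exp (-a * (n : ℝ) ^ 2)) := by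
  refine Summable.of_nonneg_of_le (fun n => (Real.exp_pos _).le) (fun n => ?_)
    (summable_geometric_of_lt_one (Real.exp_pos (-a)).le (Real.exp_lt_one_iff.2 (by linarith)))
  show Real.exp (-a * (n : ℝ) ^ 2) ≤ Real.exp (-a) ^ n
  rw [← Real.exp_nat_mul]
  apply Real.exp_le_exp.2
  have hn : (n : ℝ) ≤ (n : ℝ) ^ 2 := by
    rcases Nat.eq_zero_or_pos n with h | h
    · simp [h]
    · have : (1 : ℝ) ≤ (n : ℝ) := by exact_mod_cast h
      nlinarith
  nlinarith

lemma summable_nat_sq_exp {a : ℝ} (ha : 0 < a) :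
    Summable (fun n : ℕ => (n : ℝ) ^ 2 * Real.exp (-a * (n : ℝ) ^ 2)) := by
  refine Summable.of_nonneg_of_le (fun n => by positivity) (fun n => ?_)
    ((summable_nat_exp (by linarith : 0 < a / 2)).mul_left (2 / a))
  show (n : ℝ) ^ 2 * Real.exp (-a * (n : ℝ) ^ 2) ≤ 2 / a * Real.exp (-(a / 2) * (n : ℝ) ^ 2)
  have h1 : (a / 2) * (n : ℝ) ^ 2 ≤ Real.exp ((a / 2) * (n : ℝ) ^ 2) := by
    have := Real.add_one_le_exp ((a / 2) * (n : ℝ) ^ 2); linarith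
  have h2 : (n : ℝ) ^ 2 ≤ (2 / a) * Real.exp ((a / 2) * (n : ℝ) ^ 2) := by
    rw [div_mul_eq_mul_div, le_div_iff₀ ha]
    nlinarith
  calc (n : ℝ) ^ 2 * Real.exp (-a * (n : ℝ) ^ 2)
      ≤ ((2 / a) * Real.exp ((a / 2) * (n : ℝ) ^ 2)) * Real.exp (-a * (n : ℝ) ^ 2) :=
        mul_le_mul_of_nonneg_right h2 (Real.exp_pos _).le
    _ = 2 / a * Real.exp (-(a / 2) * (n : ℝ) ^ 2) := by
        rw [mul_assoc, ← Real.exp_add]; ring_nf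

lemma summable_int_exp {a : ℝ} (ha : 0 < a) :
    Summable (fun n : ℤ => Real.exp (-a * (n : ℝ) ^ 2)) := by
  apply Summable.of_nat_of_neg
  · exact summable_nat_exp ha
  · convert summable_nat_exp ha using 2 with n
    · rfl
    push_cast; ring_nf

lemma summable_int_sq_exp {a : ℝ} (ha : 0 < a) :
    Summable (fun n : ℤ => (n : ℝ) ^ 2 * Real.exp (-a * (n : ℝ) ^ 2)) := by
  apply Summable.of_nat_of_neg
  · exact summable_nat_sq_exp ha
  · convert summable_nat_sq_exp ha using 2 with n
    · rfl
    push_cast; ring_nf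


lemma theta_hasDerivAt {c : ℝ} (hc : 0 < c) :
    HasDerivAt (fun y : ℝ => ∑' n : ℤ, Real.exp (-y * (n : ℝ) ^ 2))
      (∑' n : ℤ, -((n : ℝ) ^ 2) * Real.exp (-c * (n : ℝ) ^ 2)) c := by
  refine hasDerivAt_tsum_of_isPreconnected
    (u := fun n : ℤ => (n : ℝ) ^ 2 * Real.exp (-(c / 2) * (n : ℝ) ^ 2))
    (t := Set.Ioi (c / 2))
    (g := fun (n : ℤ) (y : ℝ) => Real.exp (-y * (n : ℝ) ^ 2))
    (g' := fun (n : ℤ) (y : ℝ) => -((n : ℝ) ^ 2) * Real.exp (-y * (n : ℝ) ^ 2))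
    (y₀ := c) (y := c)
    (summable_int_sq_exp (by linarith)) isOpen_Ioi isPreconnected_Ioi
    (fun n y _ => ?_) (fun n y hy => ?_) (Set.mem_Ioi.2 (by linarith))
    (summable_int_exp hc) (Set.mem_Ioi.2 (by linarith))
  · have h1 : HasDerivAt (fun y : ℝ => -y * (n : ℝ) ^ 2) (-((n : ℝ) ^ 2)) y := by
      have h0 := (hasDerivAt_id y).neg.mul_const ((n : ℝ) ^ 2)
      convert h0 using 1
      · rfl
      · rfl
      · rfl
      · ring
    have h2 := h1.exp
    convert h2 using 1
    · rfl
    · rfl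
    ring
  · have hy' : c / 2 ≤ y := le_of_lt hy
    rw [norm_mul, norm_neg, norm_pow]
    simp only [Real.norm_eq_abs]
    rw [abs_of_nonneg (Real.exp_pos _).le, sq_abs]
    apply mul_le_mul_of_nonneg_left _ (sq_nonneg (n : ℝ))
    exact Real.exp_le_exp.2 (by nlinarith [sq_nonneg (n : ℝ)])

lemma psi_hasDerivAt {c : ℝ} (hc : 0 < c) :
    HasDerivAt (fun y : ℝ => ∑' n : ℤ, Real.exp (-(Real.pi ^ 2 * (n : ℝ) ^ 2) * y⁻¹))
      (∑' n : ℤ, Real.pi ^ 2 * (n : ℝ) ^ 2 / c ^ 2 *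
        Real.exp (-(Real.pi ^ 2 * (n : ℝ) ^ 2) * c⁻¹)) c := by
  have hsum : Summable (fun n : ℤ =>
      4 * Real.pi ^ 2 / c ^ 2 * ((n : ℝ) ^ 2 * Real.exp (-(Real.pi ^ 2 / (2 * c)) * (n : ℝ) ^ 2))) :=
    (summable_int_sq_exp (by positivity)).mul_left _
  have hsum0 : Summable (fun n : ℤ => Real.exp (-(Real.pi ^ 2 * (n : ℝ) ^ 2) * c⁻¹)) := by
    refine Summable.of_nonneg_of_le (fun n => (Real.exp_pos _).le) (fun n => ?_)
      (summable_int_exp (a := Real.pi ^ 2 * c⁻¹) (by positivity))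
    exact le_of_eq (by rw [show -(Real.pi ^ 2 * c⁻¹) * (n : ℝ) ^ 2
      = -(Real.pi ^ 2 * (n : ℝ) ^ 2) * c⁻¹ by ring])
  refine hasDerivAt_tsum_of_isPreconnected
    (u := fun n : ℤ =>
      4 * Real.pi ^ 2 / c ^ 2 * ((n : ℝ) ^ 2 * Real.exp (-(Real.pi ^ 2 / (2 * c)) * (n : ℝ) ^ 2)))
    (t := Set.Ioo (c / 2) (2 * c))
    (g := fun (n : ℤ) (y : ℝ) => Real.exp (-(Real.pi ^ 2 * (n : ℝ) ^ 2) * y⁻¹))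
    (g' := fun (n : ℤ) (y : ℝ) => Real.pi ^ 2 * (n : ℝ) ^ 2 / y ^ 2 *
      Real.exp (-(Real.pi ^ 2 * (n : ℝ) ^ 2) * y⁻¹))
    (y₀ := c) (y := c)
    hsum isOpen_Ioo isPreconnected_Ioo
    (fun n y hy => ?_) (fun n y hy => ?_)
    (Set.mem_Ioo.2 ⟨by linarith, by linarith⟩) hsum0
    (Set.mem_Ioo.2 ⟨by linarith, by linarith⟩)
  · have hy0 : 0 < y := lt_trans (half_pos hc) hy.1
    have h1 : HasDerivAt (fun y : ℝ => -(Real.pi ^ 2 * (n : ℝ) ^ 2) * y⁻¹)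
        (-(Real.pi ^ 2 * (n : ℝ) ^ 2) * (-(y ^ 2)⁻¹)) y :=
      (hasDerivAt_inv hy0.ne').const_mul _
    have h2 := h1.exp
    convert h2 using 1
    · rfl
    · rfl
    simp only [div_eq_mul_inv]
    ring
  · have h1 : c / 2 < y := hy.1
    have h2 : y < 2 * c := hy.2
    have hy0 : 0 < y := lt_trans (half_pos hc) h1
    rw [Real.norm_eq_abs, abs_of_nonneg (by positivity)]
    have e1 : Real.exp (-(Real.pi ^ 2 * (n : ℝ) ^ 2) * y⁻¹) ≤
        Real.exp (-(Real.pi ^ 2 / (2 * c)) * (n : ℝ) ^ 2) := by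
      apply Real.exp_le_exp.2
      have hinv : (2 * c)⁻¹ ≤ y⁻¹ := by
        apply inv_anti₀ hy0 (le_of_lt h2)
      have hA : 0 ≤ Real.pi ^ 2 * (n : ℝ) ^ 2 := by positivity
      calc -(Real.pi ^ 2 * (n : ℝ) ^ 2) * y⁻¹ ≤ -(Real.pi ^ 2 * (n : ℝ) ^ 2) * (2 * c)⁻¹ := by
            nlinarith
        _ = -(Real.pi ^ 2 / (2 * c)) * (n : ℝ) ^ 2 := by ring
    have e2 : Real.pi ^ 2 * (n : ℝ) ^ 2 / y ^ 2 ≤ 4 * Real.pi ^ 2 / c ^ 2 * (n : ℝ) ^ 2 := by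
      have hy2 : c ^ 2 / 4 ≤ y ^ 2 := by nlinarith
      calc Real.pi ^ 2 * (n : ℝ) ^ 2 / y ^ 2
          ≤ Real.pi ^ 2 * (n : ℝ) ^ 2 / (c ^ 2 / 4) := by
            gcongr
        _ = 4 * Real.pi ^ 2 / c ^ 2 * (n : ℝ) ^ 2 := by
            field_simp
    calc Real.pi ^ 2 * (n : ℝ) ^ 2 / y ^ 2 * Real.exp (-(Real.pi ^ 2 * (n : ℝ) ^ 2) * y⁻¹)
        ≤ (4 * Real.pi ^ 2 / c ^ 2 * (n : ℝ) ^ 2) *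
          Real.exp (-(Real.pi ^ 2 / (2 * c)) * (n : ℝ) ^ 2) :=
          mul_le_mul e2 e1 (Real.exp_pos _).le (by positivity)
      _ = 4 * Real.pi ^ 2 / c ^ 2 *
          ((n : ℝ) ^ 2 * Real.exp (-(Real.pi ^ 2 / (2 * c)) * (n : ℝ) ^ 2)) := by ring

lemma theta_FE {y : ℝ} (hy : 0 < y) :
    Real.sqrt y * ∑' n : ℤ, Real.exp (-y * (n : ℝ) ^ 2)
      = Real.sqrt Real.pi * ∑' n : ℤ, Real.exp (-(Real.pi ^ 2 * (n : ℝ) ^ 2) * y⁻¹) := by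
  have hp := Real.pi_pos
  have ha : 0 < y / Real.pi := by positivity
  have key := Real.tsum_exp_neg_mul_int_sq ha
  have hpy : (y / Real.pi) * Real.pi = y := div_mul_cancel₀ y (ne_of_gt hp)
  have e1 : ∀ n : ℤ, -Real.pi * (y / Real.pi) * (n : ℝ) ^ 2 = -y * (n : ℝ) ^ 2 := by
    intro n
    rw [show -Real.pi * (y / Real.pi) * (n : ℝ) ^ 2
        = -((y / Real.pi) * Real.pi) * (n : ℝ) ^ 2 by ring, hpy]
  have e2' : -Real.pi / (y / Real.pi) = -(Real.pi ^ 2) * y⁻¹ := by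
    rw [div_div_eq_mul_div, div_eq_mul_inv]
    ring
  have e2 : ∀ n : ℤ, -Real.pi / (y / Real.pi) * (n : ℝ) ^ 2
      = -(Real.pi ^ 2 * (n : ℝ) ^ 2) * y⁻¹ := by
    intro n; rw [e2']; ring
  have k1 : ∑' n : ℤ, Real.exp (-y * (n : ℝ) ^ 2)
      = ∑' n : ℤ, Real.exp (-Real.pi * (y / Real.pi) * (n : ℝ) ^ 2) :=
    tsum_congr (fun n => by rw [e1 n])
  have k2 : ∑' n : ℤ, Real.exp (-Real.pi / (y / Real.pi) * (n : ℝ) ^ 2)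
      = ∑' n : ℤ, Real.exp (-(Real.pi ^ 2 * (n : ℝ) ^ 2) * y⁻¹) :=
    tsum_congr (fun n => by rw [e2 n])
  have h3 : Real.sqrt (y / Real.pi) = Real.sqrt y / Real.sqrt Real.pi := Real.sqrt_div hy.le _
  have h4 : Real.sqrt y ≠ 0 := by positivity
  have h5 : Real.sqrt Real.pi ≠ 0 := by positivity
  rw [k1, key, ← k2, ← Real.sqrt_eq_rpow, h3]
  field_simp


lemma key_identity {c : ℝ} (hc : 0 < c) :
    ∑' n : ℤ, (1 - 2 * c * (n : ℝ) ^ 2) * Real.exp (-c * (n : ℝ) ^ 2)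
      = 2 * Real.sqrt (Real.pi * c) *
        ∑' n : ℤ, Real.pi ^ 2 * (n : ℝ) ^ 2 / c ^ 2 *
          Real.exp (-(Real.pi ^ 2 * (n : ℝ) ^ 2) * c⁻¹) := by
  have hθ := theta_hasDerivAt hc
  have hψ := psi_hasDerivAt hc
  have hs : Real.sqrt c ≠ 0 := by positivity
  have hss : Real.sqrt c * Real.sqrt c = c := Real.mul_self_sqrt hc.le
  set θ := ∑' n : ℤ, Real.exp (-c * (n : ℝ) ^ 2) with hθdef
  set θ' := ∑' n : ℤ, -((n : ℝ) ^ 2) * Real.exp (-c * (n : ℝ) ^ 2) with hθ'def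
  set D := ∑' n : ℤ, Real.pi ^ 2 * (n : ℝ) ^ 2 / c ^ 2 *
    Real.exp (-(Real.pi ^ 2 * (n : ℝ) ^ 2) * c⁻¹) with hDdef
  have hL : HasDerivAt (fun y : ℝ => Real.sqrt y * ∑' n : ℤ, Real.exp (-y * (n : ℝ) ^ 2))
      (1 / (2 * Real.sqrt c) * θ + Real.sqrt c * θ') c :=
    (Real.hasDerivAt_sqrt hc.ne').mul hθ
  have hR : HasDerivAt
      (fun y : ℝ => Real.sqrt Real.pi * ∑' n : ℤ, Real.exp (-(Real.pi ^ 2 * (n : ℝ) ^ 2) * y⁻¹))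
      (Real.sqrt Real.pi * D) c := hψ.const_mul _
  have hEq : (fun y : ℝ => Real.sqrt y * ∑' n : ℤ, Real.exp (-y * (n : ℝ) ^ 2))
      =ᶠ[nhds c] (fun y : ℝ =>
        Real.sqrt Real.pi * ∑' n : ℤ, Real.exp (-(Real.pi ^ 2 * (n : ℝ) ^ 2) * y⁻¹)) := by
    filter_upwards [Ioi_mem_nhds hc] with y hy
    exact theta_FE hy
  have hL' : HasDerivAt
      (fun y : ℝ => Real.sqrt Real.pi * ∑' n : ℤ, Real.exp (-(Real.pi ^ 2 * (n : ℝ) ^ 2) * y⁻¹))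
      (1 / (2 * Real.sqrt c) * θ + Real.sqrt c * θ') c := by
    apply HasDerivAt.congr_of_eventuallyEq hL hEq.symm
  have huniq : 1 / (2 * Real.sqrt c) * θ + Real.sqrt c * θ' = Real.sqrt Real.pi * D :=
    hL'.unique hR
  have hsum1 := summable_int_exp hc
  have hsum3 : Summable (fun n : ℤ => -((n : ℝ) ^ 2) * Real.exp (-c * (n : ℝ) ^ 2)) := by
    have := (summable_int_sq_exp hc).neg
    convert this using 2 with n
    · rfl
    ring
  have split : ∑' n : ℤ, (1 - 2 * c * (n : ℝ) ^ 2) * Real.exp (-c * (n : ℝ) ^ 2)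
      = θ + 2 * c * θ' := by
    rw [hθdef, hθ'def, ← tsum_mul_left, ← Summable.tsum_add hsum1 (hsum3.mul_left (2 * c))]
    exact tsum_congr fun n => by ring
  have h1 : 2 * Real.sqrt c * (1 / (2 * Real.sqrt c)) = 1 := by field_simp
  have expand : 2 * Real.sqrt c * (1 / (2 * Real.sqrt c) * θ + Real.sqrt c * θ')
      = θ + 2 * c * θ' := by
    calc 2 * Real.sqrt c * (1 / (2 * Real.sqrt c) * θ + Real.sqrt c * θ')
        = (2 * Real.sqrt c * (1 / (2 * Real.sqrt c))) * θ
          + 2 * (Real.sqrt c * Real.sqrt c) * θ' := by ring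
      _ = θ + 2 * c * θ' := by rw [h1, hss]; ring
  rw [split, ← expand, huniq, Real.sqrt_mul Real.pi_pos.le]
  ring


lemma exp_ge_four_sq {x : ℝ} (hx : (19:ℝ)/2 ≤ x) : 4 * x ^ 2 ≤ Real.exp x := by
  have h8 : x / 8 + 1 ≤ Real.exp (x / 8) := Real.add_one_le_exp _
  have hpos : (0:ℝ) ≤ x / 8 + 1 := by linarith
  have h4 : (x / 8 + 1) ^ 4 ≤ (Real.exp (x / 8)) ^ 4 := pow_le_pow_left₀ hpos h8 4
  have hexp4 : (Real.exp (x / 8)) ^ 4 = Real.exp (x / 2) := by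
    rw [← Real.exp_nat_mul]; congr 1; push_cast; ring
  have h2x : 2 * x ≤ (x / 8 + 1) ^ 4 := by
    nlinarith [sq_nonneg (x - 19 / 2), sq_nonneg x, sq_nonneg (x ^ 2 - 4 * x)]
  have hhalf : 2 * x ≤ Real.exp (x / 2) := by
    calc 2 * x ≤ (x / 8 + 1) ^ 4 := h2x
      _ ≤ (Real.exp (x / 8)) ^ 4 := h4
      _ = Real.exp (x / 2) := hexp4
  have hsq : (2 * x) ^ 2 ≤ (Real.exp (x / 2)) ^ 2 := pow_le_pow_left₀ (by linarith) hhalf 2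
  have hexp2 : (Real.exp (x / 2)) ^ 2 = Real.exp x := by
    rw [← Real.exp_nat_mul]; congr 1; push_cast; ring
  nlinarith [hsq, hexp2]

lemma tail_bound {t : ℝ} (ht : (19:ℝ) ≤ t) :
    ∑' n : ℤ, (n : ℝ) ^ 2 * Real.exp (-t * (n : ℝ) ^ 2) ≤ 4 * Real.exp (1 - t) := by
  set F : ℤ → ℝ := fun n => (n : ℝ) ^ 2 * Real.exp (-t * (n : ℝ) ^ 2) with hF
  set x := Real.exp (1 - t) with hx
  have hx0 : 0 < x := Real.exp_pos _
  have hx1 : x < 1 := Real.exp_lt_one_iff.2 (by linarith)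
  have hxhalf : x ≤ 1 / 2 := by
    have h1 : x ≤ Real.exp (-18) := Real.exp_le_exp.2 (by linarith)
    have h2 : (2:ℝ) ≤ Real.exp 18 := by nlinarith [Real.add_one_le_exp (18:ℝ)]
    have h3 : Real.exp (-18) ≤ 1 / 2 := by
      rw [Real.exp_neg]
      rw [inv_le_comm₀ (Real.exp_pos _) (by norm_num)] at *
      · linarith
    linarith
  have hFs : Summable F := summable_int_sq_exp (by linarith)
  have hFnat : Summable (fun n : ℕ => F n) := hFs.comp_injective (fun a b hab => by omega)
  have hFneg : Summable (fun n : ℕ => F (-(n + 1))) :=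
    hFs.comp_injective (fun a b hab => by omega)
  -- termwise bound for positive indices
  have hterm : ∀ n : ℕ, F ((n : ℤ) + 1) ≤ x ^ (n + 1) := by
    intro n
    set m : ℝ := (n : ℝ) + 1 with hm
    have hm1 : (1:ℝ) ≤ m := by
      rw [hm]
      have : (0:ℝ) ≤ (n : ℝ) := Nat.cast_nonneg n
      linarith
    have hm2 : m ≤ m ^ 2 := by nlinarith
    have hA : m ^ 2 ≤ Real.exp (m ^ 2) := by
      have := Real.add_one_le_exp (m ^ 2); linarith
    have hcast : F ((n : ℤ) + 1) = m ^ 2 * Real.exp (-t * m ^ 2) := by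
      simp only [hF, hm]; push_cast; ring_nf
    have hxpow : x ^ (n + 1) = Real.exp ((1 - t) * m) := by
      rw [hx, ← Real.exp_nat_mul]
      congr 1
      push_cast [hm]
      ring
    rw [hcast, hxpow]
    calc m ^ 2 * Real.exp (-t * m ^ 2)
        ≤ Real.exp (m ^ 2) * Real.exp (-t * m ^ 2) :=
          mul_le_mul_of_nonneg_right hA (Real.exp_pos _).le
      _ = Real.exp ((1 - t) * m ^ 2) := by rw [← Real.exp_add]; ring_nf
      _ ≤ Real.exp ((1 - t) * m) := by
          apply Real.exp_le_exp.2
          nlinarith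
  have hgeomS : Summable (fun n : ℕ => x ^ (n + 1)) := by
    have := (summable_geometric_of_lt_one hx0.le hx1).mul_left x
    convert this using 2 with n
    · rfl
    ring
  have hgeom : ∑' n : ℕ, x ^ (n + 1) ≤ 2 * x := by
    have h0 : (0:ℝ) < 1 - x := by linarith
    have e1 : ∑' n : ℕ, x ^ (n + 1) = x * (1 - x)⁻¹ := by
      calc ∑' n : ℕ, x ^ (n + 1) = ∑' n : ℕ, x * x ^ n := tsum_congr (fun n => by ring)
        _ = x * ∑' n : ℕ, x ^ n := tsum_mul_left
        _ = x * (1 - x)⁻¹ := by rw [tsum_geometric_of_lt_one hx0.le hx1]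
    have e2 : (1 - x)⁻¹ ≤ 2 := by
      rw [← one_div, div_le_iff₀ h0]; linarith
    rw [e1]
    nlinarith
  have hshift : Summable (fun n : ℕ => F ((n : ℤ) + 1)) := by
    have := (summable_nat_add_iff 1).2 hFnat
    convert this using 2 with n
    · rfl
    try push_cast
    try ring_nf
  have sum_pos_side : ∑' n : ℕ, F n ≤ 2 * x := by
    rw [Summable.tsum_eq_zero_add hFnat]
    have hF0 : F ((0:ℕ) : ℤ) = 0 := by simp [hF]
    rw [hF0, zero_add]
    calc (∑' n : ℕ, F ((n : ℕ) + 1 : ℕ))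
        = ∑' n : ℕ, F ((n : ℤ) + 1) := tsum_congr (fun n => by push_cast; try ring_nf)
      _ ≤ ∑' n : ℕ, x ^ (n + 1) := Summable.tsum_le_tsum hterm hshift hgeomS
      _ ≤ 2 * x := hgeom
  have hnegeq : ∀ n : ℕ, F (-((n : ℤ) + 1)) = F ((n : ℤ) + 1) := by
    intro n
    simp only [hF]
    push_cast
    ring_nf
  have sum_neg_side : ∑' n : ℕ, F (-((n : ℤ) + 1)) ≤ 2 * x := by
    calc ∑' n : ℕ, F (-((n : ℤ) + 1)) = ∑' n : ℕ, F ((n : ℤ) + 1) :=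
          tsum_congr (fun n => hnegeq n)
      _ ≤ ∑' n : ℕ, x ^ (n + 1) := Summable.tsum_le_tsum hterm hshift hgeomS
      _ ≤ 2 * x := hgeom
  calc ∑' n : ℤ, F n = (∑' n : ℕ, F n) + ∑' n : ℕ, F (-((n : ℤ) + 1)) :=
        tsum_of_nat_of_neg_add_one hFnat hFneg
    _ ≤ 2 * x + 2 * x := add_le_add sum_pos_side sum_neg_side
    _ = 4 * x := by ring

end BesselAux

theorem bessel_bridge_max_distribution (h T : ℝ) (hh : 0 < h) (hT : 0 < T) :
    (∑' n : ℤ, (1 - 4 * h ^ 2 * (n : ℝ) ^ 2 / T) * Real.exp (-2 * h ^ 2 * (n : ℝ) ^ 2 / T)) =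
      -(1 / 2) * ∑' n : ℤ,
        hermiteH2 ((2 * h / Real.sqrt (2 * T)) * n) * Real.exp (-2 * h ^ 2 * (n : ℝ) ^ 2 / T) ∧
    (∑' n : ℤ, (1 - 4 * h ^ 2 * (n : ℝ) ^ 2 / T) * Real.exp (-2 * h ^ 2 * (n : ℝ) ^ 2 / T))
      ∈ Set.Icc (0 : ℝ) 1 := by
  open BesselAux in
  have hc : 0 < 2 * h ^ 2 / T := by positivity
  set c : ℝ := 2 * h ^ 2 / T with hcdef
  have hterm : ∀ n : ℤ, (1 - 4 * h ^ 2 * (n : ℝ) ^ 2 / T) * Real.exp (-2 * h ^ 2 * (n : ℝ) ^ 2 / T)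
      = (1 - 2 * c * (n : ℝ) ^ 2) * Real.exp (-c * (n : ℝ) ^ 2) := by
    intro n
    have e1 : -2 * h ^ 2 * (n : ℝ) ^ 2 / T = -c * (n : ℝ) ^ 2 := by rw [hcdef]; ring
    have e2 : 1 - 4 * h ^ 2 * (n : ℝ) ^ 2 / T = 1 - 2 * c * (n : ℝ) ^ 2 := by rw [hcdef]; ring
    rw [e1, e2]
  have hS : (∑' n : ℤ, (1 - 4 * h ^ 2 * (n : ℝ) ^ 2 / T) * Real.exp (-2 * h ^ 2 * (n : ℝ) ^ 2 / T))
      = ∑' n : ℤ, (1 - 2 * c * (n : ℝ) ^ 2) * Real.exp (-c * (n : ℝ) ^ 2) := tsum_congr hterm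
  constructor
  · -- the Hermite identity
    rw [← tsum_mul_left]
    apply tsum_congr
    intro n
    have hs2T : Real.sqrt (2 * T) ^ 2 = 2 * T := Real.sq_sqrt (by positivity)
    have hsne : Real.sqrt (2 * T) ≠ 0 := by positivity
    have hx2 : (2 * h / Real.sqrt (2 * T) * (n : ℝ)) ^ 2 = 4 * h ^ 2 * (n : ℝ) ^ 2 / (2 * T) := by
      rw [mul_pow, div_pow, hs2T]
      ring
    simp only [hermiteH2]
    rw [hx2]
    have hT' : T ≠ 0 := ne_of_gt hT
    field_simp
    ring
  · rw [hS]
    constructor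
    · -- nonnegativity
      rw [key_identity hc]
      apply mul_nonneg (by positivity)
      exact tsum_nonneg (fun n => by positivity)
    · -- upper bound by 1
      by_cases hhalf : 1 / 2 ≤ c
      · -- termwise comparison with the indicator of 0
        have hfs : Summable (fun n : ℤ => (1 - 2 * c * (n : ℝ) ^ 2) * Real.exp (-c * (n : ℝ) ^ 2)) := by
          have h1 := summable_int_exp hc
          have h2 := (summable_int_sq_exp hc).mul_left (2 * c)
          have h3 := h1.sub h2
          convert h3 using 2 with n
          · rfl
          ring
        have hg : Summable (fun n : ℤ => if n = 0 then (1 : ℝ) else 0) :=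
          (hasSum_ite_eq (0 : ℤ) (1 : ℝ)).summable
        calc ∑' n : ℤ, (1 - 2 * c * (n : ℝ) ^ 2) * Real.exp (-c * (n : ℝ) ^ 2)
            ≤ ∑' n : ℤ, (if n = 0 then (1 : ℝ) else 0) := by
              apply Summable.tsum_le_tsum _ hfs hg
              intro n
              by_cases hn : n = 0
              · simp [hn]
              · simp only [hn, if_false]
                apply mul_nonpos_of_nonpos_of_nonneg _ (Real.exp_pos _).le
                have habs : (1 : ℤ) ≤ |n| := Int.one_le_abs hn
                have habs' : (1 : ℝ) ≤ |(n : ℝ)| := by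
                  rw [← Int.cast_abs]
                  exact_mod_cast habs
                have hn2 : (1 : ℝ) ≤ (n : ℝ) ^ 2 := by nlinarith [sq_abs ((n : ℝ))]
                nlinarith
          _ = 1 := tsum_ite_eq 0 1
      · push_neg at hhalf
        rw [key_identity hc]
        set t : ℝ := Real.pi ^ 2 / c with htdef
        have hpi : (3.14 : ℝ) ≤ Real.pi := by linarith [Real.pi_gt_d6]
        have hpisq : (9.85 : ℝ) ≤ Real.pi ^ 2 := by nlinarith
        have ht19 : (19 : ℝ) ≤ t := by
          rw [htdef, le_div_iff₀ hc]
          nlinarith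
        have hD : (∑' n : ℤ, Real.pi ^ 2 * (n : ℝ) ^ 2 / c ^ 2 *
              Real.exp (-(Real.pi ^ 2 * (n : ℝ) ^ 2) * c⁻¹))
            = (Real.pi ^ 2 / c ^ 2) * ∑' n : ℤ, (n : ℝ) ^ 2 * Real.exp (-t * (n : ℝ) ^ 2) := by
          rw [← tsum_mul_left]
          apply tsum_congr
          intro n
          rw [htdef]
          rw [show -(Real.pi ^ 2 / c) * (n : ℝ) ^ 2 = -(Real.pi ^ 2 * (n : ℝ) ^ 2) * c⁻¹ by ring]
          ring
        rw [hD]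
        set Sig : ℝ := ∑' n : ℤ, (n : ℝ) ^ 2 * Real.exp (-t * (n : ℝ) ^ 2) with hSigdef
        have hSig0 : 0 ≤ Sig := tsum_nonneg (fun n => by positivity)
        have hSigB : Sig ≤ 4 * Real.exp (1 - t) := tail_bound ht19
        have hsq2 : Real.sqrt (Real.pi * c) ≤ 2 := by
          have h4 : Real.pi * c ≤ 4 := by nlinarith [Real.pi_lt_d2]
          calc Real.sqrt (Real.pi * c) ≤ Real.sqrt 4 := Real.sqrt_le_sqrt h4
            _ = 2 := by rw [show (4 : ℝ) = 2 ^ 2 by norm_num, Real.sqrt_sq (by norm_num : (0:ℝ) ≤ 2)]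
        have hsqnn : 0 ≤ Real.sqrt (Real.pi * c) := Real.sqrt_nonneg _
        have hcoef : Real.pi ^ 2 / c ^ 2 = t ^ 2 / Real.pi ^ 2 := by
          rw [htdef]
          field_simp
        have httwo : t ^ 2 ≤ Real.exp (t / 2) := by
          have hA := exp_ge_four_sq (x := t / 2) (by linarith)
          nlinarith
        have hexpmul : Real.exp (t / 2) * Real.exp (1 - t) = Real.exp (1 - t / 2) := by
          rw [← Real.exp_add]
          ring_nf
        have hfinal : Real.exp (1 - t / 2) ≤ 1 / 2 := by
          have h1 : Real.exp (1 - t / 2) ≤ Real.exp (-(17 / 2 : ℝ)) :=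
            Real.exp_le_exp.2 (by linarith)
          have h2 : (2 : ℝ) ≤ Real.exp (17 / 2) := by
            nlinarith [Real.add_one_le_exp ((17 : ℝ) / 2)]
          have h3 : Real.exp (-(17 / 2 : ℝ)) ≤ 1 / 2 := by
            rw [Real.exp_neg, ← one_div, div_le_div_iff₀ (Real.exp_pos _) (by norm_num)]
            linarith
          linarith
        have hexp0 : (0:ℝ) ≤ Real.exp (1 - t) := (Real.exp_pos _).le
        have hπc2 : (0:ℝ) ≤ Real.pi ^ 2 / c ^ 2 := by positivity
        clear_value c t Sig
        calc 2 * Real.sqrt (Real.pi * c) * (Real.pi ^ 2 / c ^ 2 * Sig)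
            ≤ 2 * 2 * (Real.pi ^ 2 / c ^ 2 * (4 * Real.exp (1 - t))) := by
              apply mul_le_mul (by linarith) _ (mul_nonneg hπc2 hSig0) (by norm_num)
              exact mul_le_mul_of_nonneg_left hSigB hπc2
          _ = 16 * (t ^ 2 / Real.pi ^ 2) * Real.exp (1 - t) := by rw [hcoef]; ring
          _ ≤ 2 * t ^ 2 * Real.exp (1 - t) := by
              apply mul_le_mul_of_nonneg_right _ hexp0
              have hdd : t ^ 2 / Real.pi ^ 2 ≤ t ^ 2 / 8 := by
                gcongr
                linarith
              linarith
          _ ≤ 2 * Real.exp (t / 2) * Real.exp (1 - t) := by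
              apply mul_le_mul_of_nonneg_right _ hexp0
              linarith
          _ = 2 * Real.exp (1 - t / 2) := by rw [mul_assoc, hexpmul]
          _ ≤ 1 := by linarith
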